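/- For any g ∈ L²([L]×X, P), define g_i(x) = g(i,x) and ḡ(i,j) = ∫_{X⁰} g(i,x) p_{(i,j)}(x)/P_{(i,j)}(X⁰) dx. Let Ē^I(ḡ,ḡ) = (1/(2θ)) ∑_{j=1}^n ∑_{i,i'∈[L]: i'=i±1} (ḡ(i,j) − ḡ(i',j))² r_i w_{(i,j)} P_{(i,j)}(X⁰) M̄((i,j),(i',j)), where θ = P([L]×X⁰). Then Ē^I(ḡ,ḡ) ≤ (3λ/θ) ∑_{i=1}^L ∑_{j=1}^n ( r_i w_{(i,j)} / P_{(i,j)}(X⁰) ) Var_{P_{(i,j)},X⁰}(g_i) + (3λ/θ) E^I_{X⁰}(g,g), where Var_{P_{(i,j)},X⁰}(g_i) = (1/2) ∫_{X⁰}∫_{X⁰} (g_i(x)−g_i(y))² P_{(i,j)}(dx) P_{(i,j)}(dy) and E^I_{X⁰}(g,g) = (1/4) ∑_{i,i'∈[L]: i'=i±1} ∫_{X⁰} (g(i,x) − g(i',x))² min{ r_i p_i(x), r_{i'} p_{i'}(x) } dx. -/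

import Mathlib

open MeasureTheory Finset
open scoped ENNReal NNReal

noncomputable section

/-- Adjacency of temperature levels: `i' = i ± 1`. -/
def adjacent {L : ℕ} (i i' : Fin L) : Prop :=
  (i' : ℕ) = (i : ℕ) + 1 ∨ (i : ℕ) = (i' : ℕ) + 1

instance {L : ℕ} (i i' : Fin L) : Decidable (adjacent i i') := by
  unfold adjacent; infer_instance

/-- The `S`-restricted variance `(1/2) ∫_S ∫_S (g(b) - g(a))² Π(da) Π(db)`. -/
def restVar {Ω : Type*} [MeasurableSpace Ω] (Pi : Measure Ω) (S : Set Ω) (g : Ω → ℝ) : ℝ :=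
  (1 / 2) * ∫ a in S, (∫ b in S, (g b - g a) ^ 2 ∂Pi) ∂Pi

/-- The stationary measure of the simulated tempering chain: density `p(i,x) = rᵢ pᵢ(x)`. -/
def stStat {X : Type*} [MeasurableSpace X] (ν : Measure X) {L : ℕ}
    (r : Fin L → ℝ) (p : Fin L → X → ℝ) : Measure (Fin L × X) :=
  Measure.sum fun i =>
    ENNReal.ofReal (r i) • ((ν.withDensity fun x => ENNReal.ofReal (p i x)).map fun x => (i, x))

/-! ### Auxiliary lemmas -/

lemma minL4 (A B : ℝ) (hA : 0 ≤ A) (hB : 0 ≤ B) : B * min (A / B) 1 = min A B := by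
  rcases eq_or_lt_of_le hB with h | h
  · simp [← h, min_eq_right hA]
  · rw [mul_min_of_nonneg _ _ h.le, mul_div_cancel₀ _ h.ne', mul_one]

lemma ptwise (u v v' u' A B : ℝ) (hA : 0 ≤ A) (hB : 0 ≤ B) :
    (u - u')^2 * min A B ≤ 3*((u - v)^2 * B + (v - v')^2 * min A B + (v' - u')^2 * A) := by
  have h0 : 0 ≤ min A B := le_min hA hB
  have h1 : min A B ≤ A := min_le_left _ _
  have h2 : min A B ≤ B := min_le_right _ _
  have key : (u - u')^2 ≤ 3*((u-v)^2 + (v-v')^2 + (v'-u')^2) := by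
    nlinarith [sq_nonneg ((u-v)-(v-v')), sq_nonneg ((v-v')-(v'-u')), sq_nonneg ((u-v)-(v'-u'))]
  calc (u - u')^2 * min A B ≤ (3*((u-v)^2 + (v-v')^2 + (v'-u')^2)) * min A B :=
        mul_le_mul_of_nonneg_right key h0
    _ = 3*((u-v)^2 * min A B + (v-v')^2 * min A B + (v'-u')^2 * min A B) := by ring
    _ ≤ 3*((u - v)^2 * B + (v - v')^2 * min A B + (v' - u')^2 * A) := by
        have k2 : (u-v)^2 * min A B ≤ (u-v)^2 * B := mul_le_mul_of_nonneg_left h2 (sq_nonneg _)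
        have k3 : (v'-u')^2 * min A B ≤ (v'-u')^2 * A := mul_le_mul_of_nonneg_left h1 (sq_nonneg _)
        linarith

lemma int_wd {X : Type*} [MeasurableSpace X] (ν : Measure X) (f : X → ℝ)
    (hf : Measurable f) (hf0 : ∀ x, 0 ≤ f x) (S : Set X) (hS : MeasurableSet S) (g : X → ℝ) :
    ∫ x in S, g x ∂(ν.withDensity fun x => ENNReal.ofReal (f x)) = ∫ x in S, f x * g x ∂ν := by
  have he : (fun x => ENNReal.ofReal (f x)) = fun x => ((f x).toNNReal : ℝ≥0∞) := rfl
  rw [he, setIntegral_withDensity_eq_setIntegral_smul (hf.real_toNNReal) g hS]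
  refine integral_congr_ae (Filter.Eventually.of_forall fun x => ?_)
  simp [NNReal.smul_def, Real.coe_toNNReal _ (hf0 x)]

section
variable {X : Type*} [MeasurableSpace X] (ν : Measure X) (pc : X → ℝ) (X0 : Set X) (q : X → ℝ)

lemma expand_sq
    (Ipc : Integrable pc (ν.restrict X0))
    (Iq1 : Integrable (fun x => q x * pc x) (ν.restrict X0))
    (Iq2 : Integrable (fun x => q x ^ 2 * pc x) (ν.restrict X0)) (c : ℝ) :
    ∫ x in X0, (q x - c)^2 * pc x ∂ν
      = (∫ x in X0, q x ^ 2 * pc x ∂ν) - 2*c*(∫ x in X0, q x * pc x ∂ν)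
        + c^2 * (∫ x in X0, pc x ∂ν) := by
  rw [show (fun x => (q x - c)^2 * pc x)
      = fun x => (q x ^ 2 * pc x + c^2 * pc x) - (2*c)*(q x * pc x) from
    funext fun x => by ring]
  have IA : Integrable (fun x => q x ^ 2 * pc x + c^2 * pc x) (ν.restrict X0) :=
    Iq2.add (Ipc.const_mul _)
  rw [integral_sub IA (Iq1.const_mul _), integral_add Iq2 (Ipc.const_mul _),
    integral_const_mul _ _, integral_const_mul _ _]
  ring

lemma restVar_eq (hm : Measurable pc) (h0 : ∀ x, 0 ≤ pc x) (hX0 : MeasurableSet X0)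
    (Ipc : Integrable pc (ν.restrict X0))
    (Iq1 : Integrable (fun x => q x * pc x) (ν.restrict X0))
    (Iq2 : Integrable (fun x => q x ^ 2 * pc x) (ν.restrict X0))
    (P : ℝ) (hP : P = ∫ x in X0, pc x ∂ν) (hPpos : 0 < P) :
    restVar (ν.withDensity fun x => ENNReal.ofReal (pc x)) X0 q
      = P * ∫ x in X0, (q x - ∫ y in X0, q y * (pc y / P) ∂ν)^2 * pc x ∂ν := by
  set I1 := ∫ x in X0, q x * pc x ∂ν with hI1
  set I2 := ∫ x in X0, q x ^ 2 * pc x ∂ν with hI2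
  have hgb : (∫ y in X0, q y * (pc y / P) ∂ν) = I1 / P := by
    rw [show (fun y => q y * (pc y / P)) = fun y => (q y * pc y)/P from
      funext fun y => by ring, integral_div]
  have hinner : ∀ a : X,
      (∫ b in X0, (q b - q a)^2 ∂(ν.withDensity fun x => ENNReal.ofReal (pc x)))
        = I2 - 2*(q a)*I1 + (q a)^2*P := by
    intro a
    rw [int_wd ν pc hm h0 X0 hX0,
      show (fun b => pc b * (q b - q a)^2) = fun b => (q b - q a)^2 * pc b from
        funext fun b => by ring,
      expand_sq ν pc X0 q Ipc Iq1 Iq2 (q a), hP]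
  have houter : restVar (ν.withDensity fun x => ENNReal.ofReal (pc x)) X0 q
      = (1/2) * ∫ a in X0, pc a * (I2 - 2*(q a)*I1 + (q a)^2*P) ∂ν := by
    unfold restVar
    rw [int_wd ν pc hm h0 X0 hX0]
    congr 1
    exact integral_congr_ae (Filter.Eventually.of_forall fun a => by dsimp only; rw [hinner a])
  rw [houter, hgb, expand_sq ν pc X0 q Ipc Iq1 Iq2 (I1/P),
    show (fun a => pc a * (I2 - 2*(q a)*I1 + (q a)^2*P))
      = fun a => (I2 * pc a + P*(q a^2*pc a)) - (2*I1)*(q a*pc a) from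
      funext fun a => by ring,
    integral_sub (show Integrable (fun a => I2 * pc a + P*(q a^2*pc a)) (ν.restrict X0) from
      (Ipc.const_mul _).add (Iq2.const_mul _)) (Iq1.const_mul _),
    integral_add (Ipc.const_mul _) (Iq2.const_mul _), integral_const_mul _ _,
    integral_const_mul _ _, integral_const_mul _ _, ← hP, ← hI1, ← hI2]
  field_simp
  ring

end

lemma key_int {X : Type*} [MeasurableSpace X] (ν : Measure X) {L : ℕ} (r : Fin L → ℝ)
    (hr : ∀ i, 0 < r i) (p : Fin L → X → ℝ) (hp0 : ∀ i x, 0 ≤ p i x)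
    (hpm : ∀ i, Measurable (p i)) (g : Fin L × X → ℝ) (hgm : Measurable g)
    (hg : MemLp g 2 (stStat ν r p)) (i : Fin L) :
    Integrable (fun x => g (i, x)^2 * p i x) ν := by
  have h1 : Integrable (fun z => g z^2) (stStat ν r p) := hg.integrable_sq
  have h2 : Integrable (fun z => g z^2)
      (ENNReal.ofReal (r i) • ((ν.withDensity fun x => ENNReal.ofReal (p i x)).map
        fun x => (i, x))) := h1.mono_measure (Measure.le_sum _ i)
  rw [integrable_smul_measure (by simp [ENNReal.ofReal_eq_zero, not_le, hr i]) ENNReal.ofReal_ne_top] at h2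
  rw [integrable_map_measure ((hgm.pow_const 2).aestronglyMeasurable) measurable_prodMk_left.aemeasurable] at h2
  rw [integrable_withDensity_iff ((hpm i).ennreal_ofReal)
    (Filter.Eventually.of_forall fun x => ENNReal.ofReal_lt_top)] at h2
  refine h2.congr (Filter.Eventually.of_forall fun x => ?_)
  simp [Function.comp, ENNReal.toReal_ofReal (hp0 i x)]

lemma card_adj_le {L : ℕ} (i : Fin L) :
    ((Finset.univ : Finset (Fin L)).filter fun i' => adjacent i i').card ≤ 2 := by
  classical
  have h := Finset.card_le_card_of_injOn
    (s := ((Finset.univ : Finset (Fin L)).filter fun i' => adjacent i i'))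
    (t := (Finset.univ : Finset Bool)) (fun i' : Fin L => decide ((i' : ℕ) = (i : ℕ) + 1))
    (fun a _ => Finset.mem_univ _) ?_
  · simpa using h
  · intro a ha b hb hab
    simp only [Finset.coe_filter, Set.mem_setOf_eq, Finset.mem_univ, true_and] at ha hb
    have hiff : ((a : ℕ) = (i : ℕ) + 1) ↔ ((b : ℕ) = (i : ℕ) + 1) := by
      simpa [decide_eq_decide] using hab
    unfold adjacent at ha hb
    rcases ha with ha | ha <;> rcases hb with hb | hb <;> apply Fin.ext <;> omega

lemma card_adj_le' {L : ℕ} (i' : Fin L) :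
    ((Finset.univ : Finset (Fin L)).filter fun i => adjacent i i').card ≤ 2 := by
  classical
  have h := Finset.card_le_card_of_injOn
    (s := ((Finset.univ : Finset (Fin L)).filter fun i => adjacent i i'))
    (t := (Finset.univ : Finset Bool)) (fun i : Fin L => decide ((i : ℕ) = (i' : ℕ) + 1))
    (fun a _ => Finset.mem_univ _) ?_
  · simpa using h
  · intro a ha b hb hab
    simp only [Finset.coe_filter, Set.mem_setOf_eq, Finset.mem_univ, true_and] at ha hb
    have hiff : ((a : ℕ) = (i' : ℕ) + 1) ↔ ((b : ℕ) = (i' : ℕ) + 1) := by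
      simpa [decide_eq_decide] using hab
    unfold adjacent at ha hb
    rcases ha with ha | ha <;> rcases hb with hb | hb <;> apply Fin.ext <;> omega

lemma inner_le {L : ℕ} (i : Fin L) (c : ℝ) (hc : 0 ≤ c) :
    ∑ i' : Fin L, (if adjacent i i' then c else 0) ≤ 2 * c := by
  classical
  rw [← Finset.sum_filter, Finset.sum_const, nsmul_eq_mul]
  apply mul_le_mul_of_nonneg_right _ hc
  exact_mod_cast card_adj_le i

lemma inner_le' {L : ℕ} (i' : Fin L) (c : ℝ) (hc : 0 ≤ c) :
    ∑ i : Fin L, (if adjacent i i' then c else 0) ≤ 2 * c := by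
  classical
  rw [← Finset.sum_filter, Finset.sum_const, nsmul_eq_mul]
  apply mul_le_mul_of_nonneg_right _ hc
  exact_mod_cast card_adj_le' i'

theorem stmt3 {X : Type*} [MeasurableSpace X] (ν : Measure X)
    (L n : ℕ) (hL : 2 ≤ L) (hn : 0 < n)
    (lam : ℝ) (hlam : lam ∈ Set.Ioo (0 : ℝ) 1)
    (r : Fin L → ℝ) (hr : ∀ i, 0 < r i) (hr1 : ∑ i, r i = 1)
    (w : Fin L → Fin n → ℝ) (hw : ∀ i j, 0 ≤ w i j) (hw1 : ∀ i, ∑ j, w i j = 1)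
    (pc : Fin L → Fin n → X → ℝ)
    (hpc0 : ∀ i j x, 0 ≤ pc i j x) (hpcm : ∀ i j, Measurable (pc i j))
    (hpc1 : ∀ i j, ∫ x, pc i j x ∂ν = 1)
    (X0 : Set X) (hX0 : MeasurableSet X0)
    (hpos : ∀ i j, 0 < ∫ x in X0, pc i j x ∂ν)
    (p : Fin L → X → ℝ) (hp : ∀ i x, p i x = ∑ j, w i j * pc i j x)
    (PijX0 : Fin L → Fin n → ℝ) (hPij : ∀ i j, PijX0 i j = ∫ x in X0, pc i j x ∂ν)
    (θ : ℝ) (hθ : θ = ∑ i, r i * ∫ x in X0, p i x ∂ν)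
    -- the function `g ∈ L²([L] × X, P)` and its projection `ḡ`
    (g : Fin L × X → ℝ) (hgm : Measurable g) (hg : MemLp g 2 (stStat ν r p))
    (gbar : Fin L → Fin n → ℝ)
    (hgbar : ∀ i j, gbar i j = ∫ x in X0, g (i, x) * (pc i j x / PijX0 i j) ∂ν)
    -- the between-level part `Ē^I` of the Dirichlet form of the projected chain
    (EIbar : ℝ)
    (hEIbar : EIbar = (1 / (2 * θ)) * ∑ j : Fin n, ∑ i : Fin L, ∑ i' : Fin L,
      if adjacent i i' then
        (gbar i j - gbar i' j) ^ 2 * (r i * w i j * PijX0 i j) *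
          ((lam / 2) * ∫ x in X0, (pc i j x / PijX0 i j) *
            min ((r i' * w i' j * pc i' j x) / (r i * w i j * pc i j x)) 1 ∂ν)
      else 0)
    -- the between-level part `E^I_{X⁰}(g,g)` of the Dirichlet form of the tempering chain
    (EIg : ℝ)
    (hEIg : EIg = (1 / 4) * ∑ i : Fin L, ∑ i' : Fin L,
      if adjacent i i' then
        ∫ x in X0, (g (i, x) - g (i', x)) ^ 2 * min (r i * p i x) (r i' * p i' x) ∂ν
      else 0) :
    EIbar ≤ (3 * lam / θ) * (∑ i : Fin L, ∑ j : Fin n,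
        (r i * w i j / PijX0 i j) *
          restVar (ν.withDensity fun x => ENNReal.ofReal (pc i j x)) X0 (fun x => g (i, x)))
      + (3 * lam / θ) * EIg := by
  classical
  obtain ⟨V, hV⟩ : ∃ V : Fin L → Fin n → ℝ,
      ∀ i j, V i j = ∫ x in X0, (g (i, x) - gbar i j) ^ 2 * pc i j x ∂ν := ⟨_, fun _ _ => rfl⟩
  have hqm : ∀ i : Fin L, Measurable fun x => g (i, x) := fun i => hgm.comp measurable_prodMk_left
  have hp0 : ∀ i x, 0 ≤ p i x := fun i x => by
    rw [hp]; exact Finset.sum_nonneg fun j _ => mul_nonneg (hw i j) (hpc0 i j x)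
  have hpm : ∀ i, Measurable (p i) := fun i => by
    have hfe : p i = fun x => ∑ j, w i j * pc i j x := funext fun x => hp i x
    rw [hfe]
    exact Finset.measurable_sum _ fun j _ => (hpcm i j).const_mul _
  have Ipc : ∀ i j, Integrable (pc i j) ν := fun i j => by
    by_contra h
    have h0 := integral_undef h
    rw [hpc1 i j] at h0
    exact one_ne_zero h0
  have IpcR : ∀ i j, Integrable (pc i j) (ν.restrict X0) := fun i j => (Ipc i j).restrict
  have hPpos : ∀ i j, 0 < PijX0 i j := fun i j => by rw [hPij]; exact hpos i j
  have hlam0 : (0:ℝ) ≤ lam := hlam.1.le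
  -- θ > 0
  have hIp : ∀ i, (0:ℝ) < ∫ x in X0, p i x ∂ν := by
    intro i
    have hsum : ∫ x in X0, p i x ∂ν = ∑ j, w i j * PijX0 i j := by
      rw [integral_congr_ae (Filter.Eventually.of_forall fun x => hp i x),
        integral_finset_sum _ fun j _ => (IpcR i j).const_mul _]
      exact Finset.sum_congr rfl fun j _ => by rw [integral_const_mul _ _, hPij]
    rw [hsum]
    have hex : ∃ j, w i j ≠ 0 := by
      by_contra hno
      push_neg at hno
      have h0 : ∑ j, w i j = 0 := Finset.sum_eq_zero fun j _ => hno j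
      rw [hw1 i] at h0; exact one_ne_zero h0
    obtain ⟨j0, hj0⟩ := hex
    exact Finset.sum_pos' (fun j _ => mul_nonneg (hw i j) (hPpos i j).le)
      ⟨j0, Finset.mem_univ _, mul_pos (lt_of_le_of_ne (hw i j0) (Ne.symm hj0)) (hPpos i j0)⟩
  have hθpos : 0 < θ := by
    rw [hθ]
    exact Finset.sum_pos (fun i _ => mul_pos (hr i) (hIp i)) ⟨⟨0, by omega⟩, Finset.mem_univ _⟩
  -- integrability from L²
  have Hq2p : ∀ i, Integrable (fun x => g (i, x) ^ 2 * p i x) ν :=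
    fun i => key_int ν r hr p hp0 hpm g hgm hg i
  have Hq2pc : ∀ i j, w i j ≠ 0 → Integrable (fun x => g (i, x) ^ 2 * pc i j x) ν := by
    intro i j hwij
    have hwpos : 0 < w i j := lt_of_le_of_ne (hw i j) (Ne.symm hwij)
    refine Integrable.mono' ((Hq2p i).div_const (w i j))
      (((hqm i).pow_const 2).mul (hpcm i j)).aestronglyMeasurable
      (Filter.Eventually.of_forall fun x => ?_)
    rw [Real.norm_eq_abs, abs_of_nonneg (mul_nonneg (sq_nonneg _) (hpc0 i j x)),
      le_div_iff₀ hwpos]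
    have hle : w i j * pc i j x ≤ p i x := by
      rw [hp]
      exact Finset.single_le_sum (fun k _ => mul_nonneg (hw i k) (hpc0 i k x)) (Finset.mem_univ j)
    nlinarith [mul_le_mul_of_nonneg_left hle (sq_nonneg (g (i, x)))]
  have Hq1pc : ∀ i j, w i j ≠ 0 → Integrable (fun x => g (i, x) * pc i j x) ν := by
    intro i j hwij
    have hbint : Integrable (fun x => g (i, x) ^ 2 * pc i j x + pc i j x) ν :=
      (Hq2pc i j hwij).add (Ipc i j)
    refine Integrable.mono' hbint
      ((hqm i).mul (hpcm i j)).aestronglyMeasurable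
      (Filter.Eventually.of_forall fun x => ?_)
    rw [Real.norm_eq_abs, abs_mul, abs_of_nonneg (hpc0 i j x)]
    have habs : |g (i, x)| ≤ g (i, x) ^ 2 + 1 := by
      nlinarith [sq_nonneg (|g (i, x)| - 1), sq_abs (g (i, x))]
    nlinarith [mul_le_mul_of_nonneg_right habs (hpc0 i j x)]
  -- elementary bounds
  have hB0 : ∀ (i : Fin L) (j : Fin n) (x : X), 0 ≤ r i * w i j * pc i j x :=
    fun i j x => mul_nonneg (mul_nonneg (hr i).le (hw i j)) (hpc0 i j x)
  have hBp : ∀ (i : Fin L) (j : Fin n) (x : X), r i * w i j * pc i j x ≤ r i * p i x := by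
    intro i j x
    have h1 : w i j * pc i j x ≤ ∑ k, w i k * pc i k x :=
      Finset.single_le_sum (fun k _ => mul_nonneg (hw i k) (hpc0 i k x)) (Finset.mem_univ j)
    calc r i * w i j * pc i j x = r i * (w i j * pc i j x) := by ring
      _ ≤ r i * ∑ k, w i k * pc i k x := mul_le_mul_of_nonneg_left h1 (hr i).le
      _ = r i * p i x := by rw [hp]
  have Imin : ∀ (i i' : Fin L) (M : X → ℝ), Measurable M → (∀ x, 0 ≤ M x) →
      (∀ x, M x ≤ r i * p i x) → (∀ x, M x ≤ r i' * p i' x) →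
      Integrable (fun x => (g (i, x) - g (i', x)) ^ 2 * M x) (ν.restrict X0) := by
    intro i i' M hMm hM0 hMi hMi'
    have hbint : Integrable (fun x => 2 * r i * (g (i, x) ^ 2 * p i x)
        + 2 * r i' * (g (i', x) ^ 2 * p i' x)) (ν.restrict X0) :=
      (((Hq2p i).restrict (s := X0)).const_mul (2 * r i)).add
        (((Hq2p i').restrict (s := X0)).const_mul (2 * r i'))
    refine Integrable.mono' hbint
      ((((hqm i).sub (hqm i')).pow_const 2).mul hMm).aestronglyMeasurable
      (Filter.Eventually.of_forall fun x => ?_)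
    rw [Real.norm_eq_abs, abs_of_nonneg (mul_nonneg (sq_nonneg _) (hM0 x))]
    have h1 := mul_le_mul_of_nonneg_left (hMi x) (sq_nonneg (g (i, x)))
    have h2 := mul_le_mul_of_nonneg_left (hMi' x) (sq_nonneg (g (i', x)))
    have h3 : (g (i, x) - g (i', x)) ^ 2 * M x ≤ (2 * g (i, x) ^ 2 + 2 * g (i', x) ^ 2) * M x :=
      mul_le_mul_of_nonneg_right (by nlinarith [sq_nonneg (g (i, x) + g (i', x))]) (hM0 x)
    nlinarith [h1, h2, h3]
  have Ie2 : ∀ (i i' : Fin L) (j : Fin n), Integrable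
      (fun x => (g (i, x) - g (i', x)) ^ 2 *
        min (r i' * w i' j * pc i' j x) (r i * w i j * pc i j x)) (ν.restrict X0) :=
    fun i i' j => Imin i i' _ (Measurable.min ((hpcm i' j).const_mul _) ((hpcm i j).const_mul _))
      (fun x => le_min (hB0 i' j x) (hB0 i j x))
      (fun x => le_trans (min_le_right _ _) (hBp i j x))
      (fun x => le_trans (min_le_left _ _) (hBp i' j x))
  have IbM : ∀ i i' : Fin L, Integrable
      (fun x => (g (i, x) - g (i', x)) ^ 2 * min (r i * p i x) (r i' * p i' x))
      (ν.restrict X0) :=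
    fun i i' => Imin i i' _ (Measurable.min ((hpm i).const_mul _) ((hpm i').const_mul _))
      (fun x => le_min (mul_nonneg (hr i).le (hp0 i x)) (mul_nonneg (hr i').le (hp0 i' x)))
      (fun x => min_le_left _ _) (fun x => min_le_right _ _)
  have Ibase : ∀ i j, w i j ≠ 0 →
      Integrable (fun x => (g (i, x) - gbar i j) ^ 2 * pc i j x) (ν.restrict X0) := by
    intro i j hwij
    rw [show (fun x => (g (i, x) - gbar i j) ^ 2 * pc i j x)
        = fun x => (g (i, x) ^ 2 * pc i j x + gbar i j ^ 2 * pc i j x)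
            - (2 * gbar i j) * (g (i, x) * pc i j x) from funext fun x => by ring]
    exact (((Hq2pc i j hwij).restrict.add ((IpcR i j).const_mul _)).sub
      ((Hq1pc i j hwij).restrict.const_mul _))
  have Ie1 : ∀ i j, Integrable
      (fun x => (gbar i j - g (i, x)) ^ 2 * (r i * w i j * pc i j x)) (ν.restrict X0) := by
    intro i j
    by_cases hwij : w i j = 0
    · rw [show (fun x => (gbar i j - g (i, x)) ^ 2 * (r i * w i j * pc i j x))
          = fun _ => (0:ℝ) from funext fun x => by rw [hwij]; ring]
      exact integrable_zero _ _ _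
    · exact ((Ibase i j hwij).const_mul (r i * w i j)).congr
        (Filter.Eventually.of_forall fun x => by ring)
  have Ie3 : ∀ i j, Integrable
      (fun x => (g (i, x) - gbar i j) ^ 2 * (r i * w i j * pc i j x)) (ν.restrict X0) :=
    fun i j => (Ie1 i j).congr (Filter.Eventually.of_forall fun x => by ring)
  have He1val : ∀ i j, (∫ x in X0, (gbar i j - g (i, x)) ^ 2 * (r i * w i j * pc i j x) ∂ν)
      = r i * w i j * V i j := by
    intro i j
    rw [show (fun x => (gbar i j - g (i, x)) ^ 2 * (r i * w i j * pc i j x))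
        = fun x => (r i * w i j) * ((g (i, x) - gbar i j) ^ 2 * pc i j x) from
      funext fun x => by ring, integral_const_mul _ _, hV i j]
  have He3val : ∀ i j, (∫ x in X0, (g (i, x) - gbar i j) ^ 2 * (r i * w i j * pc i j x) ∂ν)
      = r i * w i j * V i j := by
    intro i j
    rw [show (fun x => (g (i, x) - gbar i j) ^ 2 * (r i * w i j * pc i j x))
        = fun x => (r i * w i j) * ((g (i, x) - gbar i j) ^ 2 * pc i j x) from
      funext fun x => by ring, integral_const_mul _ _, hV i j]
  have hVnn : ∀ i j, 0 ≤ V i j := fun i j => by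
    rw [hV i j]
    exact setIntegral_nonneg hX0 fun x _ => mul_nonneg (sq_nonneg _) (hpc0 i j x)
  -- relation between restVar and V
  have F5 : ∀ i j, (r i * w i j / PijX0 i j) *
      restVar (ν.withDensity fun x => ENNReal.ofReal (pc i j x)) X0 (fun x => g (i, x))
      = r i * w i j * V i j := by
    intro i j
    by_cases hwij : w i j = 0
    · simp [hwij]
    · have hre := restVar_eq ν (pc i j) X0 (fun x => g (i, x)) (hpcm i j) (hpc0 i j) hX0
        (IpcR i j) ((Hq1pc i j hwij).restrict) ((Hq2pc i j hwij).restrict)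
        (PijX0 i j) (hPij i j) (hPpos i j)
      rw [hre]
      beta_reduce
      rw [← hgbar i j, hV i j]
      have hPne : PijX0 i j ≠ 0 := (hPpos i j).ne'
      field_simp
  have hsum' : (∑ i : Fin L, ∑ j : Fin n, (r i * w i j / PijX0 i j) *
      restVar (ν.withDensity fun x => ENNReal.ofReal (pc i j x)) X0 (fun x => g (i, x)))
      = ∑ i : Fin L, ∑ j : Fin n, r i * w i j * V i j :=
    Finset.sum_congr rfl fun i _ => Finset.sum_congr rfl fun j _ => F5 i j
  -- the central per-term bound
  have hterm : ∀ (j : Fin n) (i i' : Fin L),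
      (gbar i j - gbar i' j) ^ 2 * (r i * w i j * PijX0 i j) *
        ((lam / 2) * ∫ x in X0, (pc i j x / PijX0 i j) *
          min ((r i' * w i' j * pc i' j x) / (r i * w i j * pc i j x)) 1 ∂ν)
      ≤ (3 * lam / 2) * (r i * w i j * V i j
          + (∫ x in X0, (g (i, x) - g (i', x)) ^ 2 *
              min (r i' * w i' j * pc i' j x) (r i * w i j * pc i j x) ∂ν)
          + r i' * w i' j * V i' j) := by
    intro j i i'
    have hPne : PijX0 i j ≠ 0 := (hPpos i j).ne'
    have hpull : ((gbar i j - gbar i' j) ^ 2 * (r i * w i j * PijX0 i j)) *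
        (∫ x in X0, (pc i j x / PijX0 i j) *
          min ((r i' * w i' j * pc i' j x) / (r i * w i j * pc i j x)) 1 ∂ν)
        = ∫ x in X0, (gbar i j - gbar i' j) ^ 2 *
            min (r i' * w i' j * pc i' j x) (r i * w i j * pc i j x) ∂ν := by
      rw [← integral_const_mul _ _]
      refine integral_congr_ae (Filter.Eventually.of_forall fun x => ?_)
      have e1 : (r i * w i j * PijX0 i j) * (pc i j x / PijX0 i j)
          = r i * w i j * pc i j x := by field_simp
      calc (gbar i j - gbar i' j) ^ 2 * (r i * w i j * PijX0 i j) *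
            ((pc i j x / PijX0 i j) *
              min ((r i' * w i' j * pc i' j x) / (r i * w i j * pc i j x)) 1)
          = (gbar i j - gbar i' j) ^ 2 *
              (((r i * w i j * PijX0 i j) * (pc i j x / PijX0 i j)) *
                min ((r i' * w i' j * pc i' j x) / (r i * w i j * pc i j x)) 1) := by ring
        _ = (gbar i j - gbar i' j) ^ 2 * ((r i * w i j * pc i j x) *
              min ((r i' * w i' j * pc i' j x) / (r i * w i j * pc i j x)) 1) := by rw [e1]
        _ = (gbar i j - gbar i' j) ^ 2 *
              min (r i' * w i' j * pc i' j x) (r i * w i j * pc i j x) := by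
            rw [minL4 _ _ (hB0 i' j x) (hB0 i j x)]
    have I12 : Integrable (fun x => (gbar i j - g (i, x)) ^ 2 * (r i * w i j * pc i j x)
        + (g (i, x) - g (i', x)) ^ 2 *
            min (r i' * w i' j * pc i' j x) (r i * w i j * pc i j x)) (ν.restrict X0) :=
      (Ie1 i j).add (Ie2 i i' j)
    have step2 : (∫ x in X0, (gbar i j - gbar i' j) ^ 2 *
          min (r i' * w i' j * pc i' j x) (r i * w i j * pc i j x) ∂ν)
        ≤ ∫ x in X0, 3 * ((gbar i j - g (i, x)) ^ 2 * (r i * w i j * pc i j x)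
            + (g (i, x) - g (i', x)) ^ 2 *
                min (r i' * w i' j * pc i' j x) (r i * w i j * pc i j x)
            + (g (i', x) - gbar i' j) ^ 2 * (r i' * w i' j * pc i' j x)) ∂ν := by
      refine integral_mono_of_nonneg (Filter.Eventually.of_forall fun x =>
          mul_nonneg (sq_nonneg _) (le_min (hB0 i' j x) (hB0 i j x)))
        ((I12.add (Ie3 i' j)).const_mul 3)
        (Filter.Eventually.of_forall fun x => ?_)
      exact ptwise (gbar i j) (g (i, x)) (g (i', x)) (gbar i' j) _ _ (hB0 i' j x) (hB0 i j x)
    have step3 : (∫ x in X0, 3 * ((gbar i j - g (i, x)) ^ 2 * (r i * w i j * pc i j x)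
            + (g (i, x) - g (i', x)) ^ 2 *
                min (r i' * w i' j * pc i' j x) (r i * w i j * pc i j x)
            + (g (i', x) - gbar i' j) ^ 2 * (r i' * w i' j * pc i' j x)) ∂ν)
        = 3 * (r i * w i j * V i j
            + (∫ x in X0, (g (i, x) - g (i', x)) ^ 2 *
                min (r i' * w i' j * pc i' j x) (r i * w i j * pc i j x) ∂ν)
            + r i' * w i' j * V i' j) := by
      rw [integral_const_mul _ _, integral_add I12 (Ie3 i' j),
        integral_add (Ie1 i j) (Ie2 i i' j), He1val i j, He3val i' j]
    calc (gbar i j - gbar i' j) ^ 2 * (r i * w i j * PijX0 i j) *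
          ((lam / 2) * ∫ x in X0, (pc i j x / PijX0 i j) *
            min ((r i' * w i' j * pc i' j x) / (r i * w i j * pc i j x)) 1 ∂ν)
        = (lam / 2) * (((gbar i j - gbar i' j) ^ 2 * (r i * w i j * PijX0 i j)) *
            (∫ x in X0, (pc i j x / PijX0 i j) *
              min ((r i' * w i' j * pc i' j x) / (r i * w i j * pc i j x)) 1 ∂ν)) := by ring
      _ = (lam / 2) * ∫ x in X0, (gbar i j - gbar i' j) ^ 2 *
            min (r i' * w i' j * pc i' j x) (r i * w i j * pc i j x) ∂ν := by rw [hpull]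
      _ ≤ (lam / 2) * ∫ x in X0, 3 * ((gbar i j - g (i, x)) ^ 2 * (r i * w i j * pc i j x)
            + (g (i, x) - g (i', x)) ^ 2 *
                min (r i' * w i' j * pc i' j x) (r i * w i j * pc i j x)
            + (g (i', x) - gbar i' j) ^ 2 * (r i' * w i' j * pc i' j x)) ∂ν :=
          mul_le_mul_of_nonneg_left step2 (by linarith)
      _ = (lam / 2) * (3 * (r i * w i j * V i j
            + (∫ x in X0, (g (i, x) - g (i', x)) ^ 2 *
                min (r i' * w i' j * pc i' j x) (r i * w i j * pc i j x) ∂ν)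
            + r i' * w i' j * V i' j)) := by rw [step3]
      _ = (3 * lam / 2) * (r i * w i j * V i j
            + (∫ x in X0, (g (i, x) - g (i', x)) ^ 2 *
                min (r i' * w i' j * pc i' j x) (r i * w i j * pc i j x) ∂ν)
            + r i' * w i' j * V i' j) := by ring
  -- summation bookkeeping
  have hSig1 : (∑ j : Fin n, ∑ i : Fin L, ∑ i' : Fin L, if adjacent i i' then
      (gbar i j - gbar i' j) ^ 2 * (r i * w i j * PijX0 i j) *
        ((lam / 2) * ∫ x in X0, (pc i j x / PijX0 i j) *
          min ((r i' * w i' j * pc i' j x) / (r i * w i j * pc i j x)) 1 ∂ν)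
      else 0)
      ≤ ∑ j : Fin n, ∑ i : Fin L, ∑ i' : Fin L, if adjacent i i' then
        (3 * lam / 2) * (r i * w i j * V i j
          + (∫ x in X0, (g (i, x) - g (i', x)) ^ 2 *
              min (r i' * w i' j * pc i' j x) (r i * w i j * pc i j x) ∂ν)
          + r i' * w i' j * V i' j) else 0 := by
    refine Finset.sum_le_sum fun j _ => Finset.sum_le_sum fun i _ =>
      Finset.sum_le_sum fun i' _ => ?_
    by_cases h : adjacent i i'
    · simpa [h] using hterm j i i'
    · simp [h]
  have hsplit : (∑ j : Fin n, ∑ i : Fin L, ∑ i' : Fin L, if adjacent i i' then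
        (3 * lam / 2) * (r i * w i j * V i j
          + (∫ x in X0, (g (i, x) - g (i', x)) ^ 2 *
              min (r i' * w i' j * pc i' j x) (r i * w i j * pc i j x) ∂ν)
          + r i' * w i' j * V i' j) else 0)
      = (3 * lam / 2) * ((∑ j : Fin n, ∑ i : Fin L, ∑ i' : Fin L,
            if adjacent i i' then r i * w i j * V i j else 0)
        + (∑ j : Fin n, ∑ i : Fin L, ∑ i' : Fin L, if adjacent i i' then
            (∫ x in X0, (g (i, x) - g (i', x)) ^ 2 *
              min (r i' * w i' j * pc i' j x) (r i * w i j * pc i j x) ∂ν) else 0)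
        + (∑ j : Fin n, ∑ i : Fin L, ∑ i' : Fin L,
            if adjacent i i' then r i' * w i' j * V i' j else 0)) := by
    simp only [Finset.mul_sum, ← Finset.sum_add_distrib]
    refine Finset.sum_congr rfl fun j _ => Finset.sum_congr rfl fun i _ =>
      Finset.sum_congr rfl fun i' _ => ?_
    by_cases h : adjacent i i' <;> simp [h] <;> try ring
  have hb1 : (∑ j : Fin n, ∑ i : Fin L, ∑ i' : Fin L,
        if adjacent i i' then r i * w i j * V i j else 0)
      ≤ 2 * ∑ i : Fin L, ∑ j : Fin n, r i * w i j * V i j := by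
    calc (∑ j : Fin n, ∑ i : Fin L, ∑ i' : Fin L,
          if adjacent i i' then r i * w i j * V i j else 0)
        ≤ ∑ j : Fin n, ∑ i : Fin L, 2 * (r i * w i j * V i j) :=
          Finset.sum_le_sum fun j _ => Finset.sum_le_sum fun i _ =>
            inner_le i _ (mul_nonneg (mul_nonneg (hr i).le (hw i j)) (hVnn i j))
      _ = 2 * ∑ i : Fin L, ∑ j : Fin n, r i * w i j * V i j := by
          rw [Finset.sum_comm]; simp only [← Finset.mul_sum]
  have hb3 : (∑ j : Fin n, ∑ i : Fin L, ∑ i' : Fin L,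
        if adjacent i i' then r i' * w i' j * V i' j else 0)
      ≤ 2 * ∑ i : Fin L, ∑ j : Fin n, r i * w i j * V i j := by
    calc (∑ j : Fin n, ∑ i : Fin L, ∑ i' : Fin L,
          if adjacent i i' then r i' * w i' j * V i' j else 0)
        = ∑ j : Fin n, ∑ i' : Fin L, ∑ i : Fin L,
            if adjacent i i' then r i' * w i' j * V i' j else 0 :=
          Finset.sum_congr rfl fun j _ => Finset.sum_comm
      _ ≤ ∑ j : Fin n, ∑ i' : Fin L, 2 * (r i' * w i' j * V i' j) :=
          Finset.sum_le_sum fun j _ => Finset.sum_le_sum fun i' _ =>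
            inner_le' i' _ (mul_nonneg (mul_nonneg (hr i').le (hw i' j)) (hVnn i' j))
      _ = 2 * ∑ i : Fin L, ∑ j : Fin n, r i * w i j * V i j := by
          rw [Finset.sum_comm]; simp only [← Finset.mul_sum]
  have hMb_le : ∀ i i' : Fin L, (∑ j : Fin n, ∫ x in X0, (g (i, x) - g (i', x)) ^ 2 *
        min (r i' * w i' j * pc i' j x) (r i * w i j * pc i j x) ∂ν)
      ≤ ∫ x in X0, (g (i, x) - g (i', x)) ^ 2 * min (r i * p i x) (r i' * p i' x) ∂ν := by
    intro i i'
    rw [← integral_finset_sum _ fun j _ => Ie2 i i' j]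
    refine integral_mono_of_nonneg (Filter.Eventually.of_forall fun x =>
        Finset.sum_nonneg fun j _ => mul_nonneg (sq_nonneg _)
          (le_min (hB0 i' j x) (hB0 i j x)))
      (IbM i i') (Filter.Eventually.of_forall fun x => ?_)
    beta_reduce
    have hsA : ∑ j, r i' * w i' j * pc i' j x = r i' * p i' x := by
      rw [hp, Finset.mul_sum]
      exact Finset.sum_congr rfl fun j _ => by ring
    have hsB : ∑ j, r i * w i j * pc i j x = r i * p i x := by
      rw [hp, Finset.mul_sum]
      exact Finset.sum_congr rfl fun j _ => by ring
    have hmin : (∑ j, min (r i' * w i' j * pc i' j x) (r i * w i j * pc i j x))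
        ≤ min (r i * p i x) (r i' * p i' x) := by
      refine le_min ?_ ?_
      · rw [← hsB]; exact Finset.sum_le_sum fun j _ => min_le_right _ _
      · rw [← hsA]; exact Finset.sum_le_sum fun j _ => min_le_left _ _
    calc (∑ j, (g (i, x) - g (i', x)) ^ 2 *
          min (r i' * w i' j * pc i' j x) (r i * w i j * pc i j x))
        = (g (i, x) - g (i', x)) ^ 2 * ∑ j,
            min (r i' * w i' j * pc i' j x) (r i * w i j * pc i j x) := by
          rw [Finset.mul_sum]
      _ ≤ (g (i, x) - g (i', x)) ^ 2 * min (r i * p i x) (r i' * p i' x) :=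
          mul_le_mul_of_nonneg_left hmin (sq_nonneg _)
  have hb2 : (∑ j : Fin n, ∑ i : Fin L, ∑ i' : Fin L, if adjacent i i' then
        (∫ x in X0, (g (i, x) - g (i', x)) ^ 2 *
          min (r i' * w i' j * pc i' j x) (r i * w i j * pc i j x) ∂ν) else 0)
      ≤ 4 * EIg := by
    calc (∑ j : Fin n, ∑ i : Fin L, ∑ i' : Fin L, if adjacent i i' then
          (∫ x in X0, (g (i, x) - g (i', x)) ^ 2 *
            min (r i' * w i' j * pc i' j x) (r i * w i j * pc i j x) ∂ν) else 0)
        = ∑ i : Fin L, ∑ j : Fin n, ∑ i' : Fin L, if adjacent i i' then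
          (∫ x in X0, (g (i, x) - g (i', x)) ^ 2 *
            min (r i' * w i' j * pc i' j x) (r i * w i j * pc i j x) ∂ν) else 0 :=
          Finset.sum_comm
      _ = ∑ i : Fin L, ∑ i' : Fin L, ∑ j : Fin n, if adjacent i i' then
          (∫ x in X0, (g (i, x) - g (i', x)) ^ 2 *
            min (r i' * w i' j * pc i' j x) (r i * w i j * pc i j x) ∂ν) else 0 :=
          Finset.sum_congr rfl fun i _ => Finset.sum_comm
      _ = ∑ i : Fin L, ∑ i' : Fin L, if adjacent i i' then
          (∑ j : Fin n, ∫ x in X0, (g (i, x) - g (i', x)) ^ 2 *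
            min (r i' * w i' j * pc i' j x) (r i * w i j * pc i j x) ∂ν) else 0 :=
          Finset.sum_congr rfl fun i _ => Finset.sum_congr rfl fun i' _ => by
            by_cases h : adjacent i i' <;> simp [h]
      _ ≤ ∑ i : Fin L, ∑ i' : Fin L, if adjacent i i' then
          (∫ x in X0, (g (i, x) - g (i', x)) ^ 2 *
            min (r i * p i x) (r i' * p i' x) ∂ν) else 0 := by
          refine Finset.sum_le_sum fun i _ => Finset.sum_le_sum fun i' _ => ?_
          by_cases h : adjacent i i'
          · simp only [if_pos h]; exact hMb_le i i'
          · simp [h]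
      _ = 4 * EIg := by rw [hEIg]; ring
  -- final assembly
  rw [hEIbar, hsum']
  calc (1 / (2 * θ)) * ∑ j : Fin n, ∑ i : Fin L, ∑ i' : Fin L, (if adjacent i i' then
        (gbar i j - gbar i' j) ^ 2 * (r i * w i j * PijX0 i j) *
          ((lam / 2) * ∫ x in X0, (pc i j x / PijX0 i j) *
            min ((r i' * w i' j * pc i' j x) / (r i * w i j * pc i j x)) 1 ∂ν)
        else 0)
      ≤ (1 / (2 * θ)) * ∑ j : Fin n, ∑ i : Fin L, ∑ i' : Fin L, (if adjacent i i' then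
        (3 * lam / 2) * (r i * w i j * V i j
          + (∫ x in X0, (g (i, x) - g (i', x)) ^ 2 *
              min (r i' * w i' j * pc i' j x) (r i * w i j * pc i j x) ∂ν)
          + r i' * w i' j * V i' j) else 0) :=
        mul_le_mul_of_nonneg_left hSig1 (div_nonneg zero_le_one (by linarith))
    _ = (1 / (2 * θ)) * ((3 * lam / 2) * ((∑ j : Fin n, ∑ i : Fin L, ∑ i' : Fin L,
            if adjacent i i' then r i * w i j * V i j else 0)
        + (∑ j : Fin n, ∑ i : Fin L, ∑ i' : Fin L, if adjacent i i' then
            (∫ x in X0, (g (i, x) - g (i', x)) ^ 2 *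
              min (r i' * w i' j * pc i' j x) (r i * w i j * pc i j x) ∂ν) else 0)
        + (∑ j : Fin n, ∑ i : Fin L, ∑ i' : Fin L,
            if adjacent i i' then r i' * w i' j * V i' j else 0))) := by rw [hsplit]
    _ ≤ (1 / (2 * θ)) * ((3 * lam / 2) *
          ((2 * ∑ i : Fin L, ∑ j : Fin n, r i * w i j * V i j) + 4 * EIg
            + 2 * ∑ i : Fin L, ∑ j : Fin n, r i * w i j * V i j)) := by
        refine mul_le_mul_of_nonneg_left (mul_le_mul_of_nonneg_left ?_ (by linarith))
          (div_nonneg zero_le_one (by linarith))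
        linarith [hb1, hb2, hb3]
    _ = (3 * lam / θ) * (∑ i : Fin L, ∑ j : Fin n, r i * w i j * V i j)
          + (3 * lam / θ) * EIg := by
        field_simp
        ring
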